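/- arXiv:1908.11372 — 3 statements merged into one kernel-verified Lean document; each statement's English description precedes it below -/
import Mathlib

section
/- Let ψ_{ABE} be a pure state on a finite-dimensional tripartite Hilbert space H_A ⊗ H_B ⊗ H_E with reduced state ρ_{AB} = tr_E(ψ_{ABE}), and let {P_a} be a projective measurement on H_A. Define the classical-quantum post-measurement state ρ_{A₀E} = Σ_a |a⟩⟨a| ⊗ tr_{AB}[(P_a ⊗ I_B ⊗ I_E) ψ_{ABE} (P_a ⊗ I_B ⊗ I_E)], and the pinching channel on AB given by T[σ] = Σ_a (P_a ⊗ I_B) σ (P_a ⊗ I_B). Then the conditional von Neumann entropy of the post-measurement state equals the entropy production of the pinching on the Alice–Bob state: H(A₀|E) = H(T[ρ_{AB}]) − H(ρ_{AB}). -/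
open scoped Matrix Kronecker BigOperators ComplexOrder
open MeasureTheory

noncomputable section

def vnEntropy {n : Type*} [Fintype n] [DecidableEq n] (ρ : Matrix n n ℂ) : ℝ :=
  if h : ρ.IsHermitian then -∑ i, h.eigenvalues i * Real.log (h.eigenvalues i) else 0

def ptraceLeft {m n : Type*} [Fintype m] (M : Matrix (m × n) (m × n) ℂ) : Matrix n n ℂ :=
  Matrix.of fun i j => ∑ k, M (k, i) (k, j)

def ptraceRight {m n : Type*} [Fintype n] (M : Matrix (m × n) (m × n) ℂ) : Matrix m m ℂ :=
  Matrix.of fun i j => ∑ k, M (i, k) (j, k)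

def condEnt {m n : Type*} [Fintype m] [Fintype n] [DecidableEq m] [DecidableEq n]
    (ρ : Matrix (m × n) (m × n) ℂ) : ℝ :=
  vnEntropy ρ - vnEntropy (ptraceLeft ρ)

def IsProjMeas {n : Type*} [Fintype n] [DecidableEq n] {ι : Type*} [Fintype ι]
    (P : ι → Matrix n n ℂ) : Prop :=
  (∀ a, (P a)ᴴ = P a) ∧ (∀ a, P a * P a = P a) ∧
    (∀ a b, a ≠ b → P a * P b = 0) ∧ (∑ a, P a = 1)

namespace EntAux

open Polynomial Matrix

set_option linter.unusedSectionVars false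

variable {n : Type*} [Fintype n] [DecidableEq n]

lemma charpoly_conj_aux (C₁ M C₂ : Matrix n n ℂ) (h : C₁ * C₂ = 1) :
    (C₁ * M * C₂).charpoly = M.charpoly := by
  let f : Matrix n n ℂ →+* Matrix n n ℂ[X] := (Polynomial.C : ℂ →+* ℂ[X]).mapMatrix
  have hscal : ∀ A : Matrix n n ℂ[X], Matrix.scalar n (X : ℂ[X]) * A = A * Matrix.scalar n X := by
    intro A
    ext i j
    simp [Matrix.scalar, Matrix.diagonal_mul, Matrix.mul_diagonal, mul_comm]
  have key : charmatrix (C₁ * M * C₂) = f C₁ * charmatrix M * f C₂ := by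
    unfold charmatrix
    have h2 : f C₁ * f C₂ = 1 := by rw [← f.map_mul, h, f.map_one]
    rw [mul_sub, sub_mul]
    congr 1
    · rw [← hscal, mul_assoc, h2, mul_one]
    · show (f (C₁ * M * C₂) : Matrix n n ℂ[X]) = f C₁ * f M * f C₂
      rw [f.map_mul, f.map_mul]
  unfold Matrix.charpoly
  have hdet : (f C₁).det * (f C₂).det = 1 := by
    rw [← det_mul, ← f.map_mul, h, f.map_one, det_one]
  rw [key, det_mul, det_mul]
  calc (f C₁).det * (charmatrix M).det * (f C₂).det
      = (charmatrix M).det * ((f C₁).det * (f C₂).det) := by ring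
    _ = (charmatrix M).det := by rw [hdet, mul_one]

lemma charpoly_diagonal_aux (d : n → ℂ) :
    (Matrix.diagonal d).charpoly = ∏ i, (X - Polynomial.C (d i)) := by
  have h : charmatrix (Matrix.diagonal d) = Matrix.diagonal fun i => X - Polynomial.C (d i) := by
    ext i j
    by_cases hij : i = j
    · subst hij; simp [charmatrix_apply_eq]
    · simp [charmatrix_apply_ne _ _ _ hij, Matrix.diagonal_apply_ne _ hij,
        Matrix.diagonal_apply_ne _ hij]
  rw [Matrix.charpoly, h, Matrix.det_diagonal]

lemma charpoly_zero_aux : (0 : Matrix n n ℂ).charpoly = X ^ Fintype.card n := by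
  have h0 : (0 : Matrix n n ℂ) = Matrix.diagonal (fun _ => 0) := by simp
  rw [h0, charpoly_diagonal_aux]
  simp [Finset.prod_const, Finset.card_univ]

lemma charpoly_mul_comm_aux {m : Type*} [Fintype m] [DecidableEq m]
    (A : Matrix m n ℂ) (B : Matrix n m ℂ) :
    (A * B).charpoly * X ^ Fintype.card n = (B * A).charpoly * X ^ Fintype.card m := by
  have hC : Matrix.fromBlocks (1 : Matrix m m ℂ) A (0 : Matrix n m ℂ) (1 : Matrix n n ℂ) *
      Matrix.fromBlocks (1 : Matrix m m ℂ) (-A) (0 : Matrix n m ℂ) (1 : Matrix n n ℂ) = 1 := by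
    rw [Matrix.fromBlocks_multiply]
    simp [← Matrix.fromBlocks_one]
  have s1 : Matrix.fromBlocks (1 : Matrix m m ℂ) A (0 : Matrix n m ℂ) (1 : Matrix n n ℂ) *
      Matrix.fromBlocks (0 : Matrix m m ℂ) (0 : Matrix m n ℂ) B (B * A) =
      Matrix.fromBlocks (A * B) (A * B * A) B (B * A) := by
    rw [Matrix.fromBlocks_multiply, Matrix.fromBlocks_inj]
    refine ⟨by simp, by simp [Matrix.mul_assoc], by simp, by simp⟩
  have s2 : Matrix.fromBlocks (A * B) (A * B * A) B (B * A) *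
      Matrix.fromBlocks (1 : Matrix m m ℂ) (-A) (0 : Matrix n m ℂ) (1 : Matrix n n ℂ) =
      Matrix.fromBlocks (A * B) (0 : Matrix m n ℂ) B (0 : Matrix n n ℂ) := by
    rw [Matrix.fromBlocks_multiply, Matrix.fromBlocks_inj]
    refine ⟨by simp, by simp [mul_neg], by simp, by simp [mul_neg]⟩
  have hsim : Matrix.fromBlocks (1 : Matrix m m ℂ) A (0 : Matrix n m ℂ) (1 : Matrix n n ℂ) *
      Matrix.fromBlocks (0 : Matrix m m ℂ) (0 : Matrix m n ℂ) B (B * A) *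
      Matrix.fromBlocks (1 : Matrix m m ℂ) (-A) (0 : Matrix n m ℂ) (1 : Matrix n n ℂ) =
      Matrix.fromBlocks (A * B) (0 : Matrix m n ℂ) B (0 : Matrix n n ℂ) := by
    rw [s1, s2]
  have h1 : (Matrix.fromBlocks (A * B) (0 : Matrix m n ℂ) B (0 : Matrix n n ℂ)).charpoly =
      (A * B).charpoly * X ^ Fintype.card n := by
    rw [Matrix.charpoly_fromBlocks_zero₁₂, charpoly_zero_aux]
  have h2 : (Matrix.fromBlocks (0 : Matrix m m ℂ) (0 : Matrix m n ℂ) B (B * A)).charpoly =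
      X ^ Fintype.card m * (B * A).charpoly := by
    rw [Matrix.charpoly_fromBlocks_zero₁₂, charpoly_zero_aux]
  rw [← h1, ← hsim, charpoly_conj_aux _ _ _ hC, h2, mul_comm]

lemma herm_charpoly {A : Matrix n n ℂ} (hA : A.IsHermitian) :
    A.charpoly = ∏ i, (X - Polynomial.C (hA.eigenvalues i : ℂ)) := by
  have h1 : (hA.eigenvectorUnitary : Matrix n n ℂ) * star (hA.eigenvectorUnitary : Matrix n n ℂ)
      = 1 := Matrix.mem_unitaryGroup_iff.mp hA.eigenvectorUnitary.2
  conv_lhs => rw [hA.spectral_theorem]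
  rw [Unitary.conjStarAlgAut_apply, charpoly_conj_aux _ _ _ h1, charpoly_diagonal_aux]
  exact Finset.prod_congr rfl fun i _ => rfl

lemma herm_roots {A : Matrix n n ℂ} (hA : A.IsHermitian) :
    A.charpoly.roots = Finset.univ.val.map fun i => (hA.eigenvalues i : ℂ) := by
  rw [herm_charpoly hA,
    ← Polynomial.roots_multiset_prod_X_sub_C (Finset.univ.val.map fun i => (hA.eigenvalues i : ℂ))]
  congr 1
  rw [Finset.prod_eq_multiset_prod, Multiset.map_map]
  rfl

lemma vnEntropy_eq_roots {A : Matrix n n ℂ} (hA : A.IsHermitian) :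
    vnEntropy A = -(A.charpoly.roots.map fun z => z.re * Real.log z.re).sum := by
  rw [vnEntropy, dif_pos hA, herm_roots hA, Multiset.map_map, Finset.sum_eq_multiset_sum]
  congr 1

lemma vnEntropy_mul_conjTranspose {m : Type*} [Fintype m] [DecidableEq m] (A : Matrix m n ℂ) :
    vnEntropy (A * Aᴴ) = vnEntropy (Aᴴ * A) := by
  have hr : (Aᴴ * A).IsHermitian := by
    simpa using Matrix.isHermitian_mul_conjTranspose_self Aᴴ
  rw [vnEntropy_eq_roots (Matrix.isHermitian_mul_conjTranspose_self A), vnEntropy_eq_roots hr]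
  have hpad := charpoly_mul_comm_aux A Aᴴ
  have hne1 : (A * Aᴴ).charpoly * X ^ Fintype.card n ≠ 0 :=
    mul_ne_zero (Matrix.charpoly_monic _).ne_zero (pow_ne_zero _ Polynomial.X_ne_zero)
  have hne2 : (Aᴴ * A).charpoly * X ^ Fintype.card m ≠ 0 :=
    mul_ne_zero (Matrix.charpoly_monic _).ne_zero (pow_ne_zero _ Polynomial.X_ne_zero)
  have h1 := congrArg Polynomial.roots hpad
  rw [Polynomial.roots_mul hne1, Polynomial.roots_mul hne2, Polynomial.roots_pow,
    Polynomial.roots_pow, Polynomial.roots_X] at h1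
  have h2 := congrArg (fun s : Multiset ℂ => (s.map fun z => z.re * Real.log z.re).sum) h1
  simp only [Multiset.map_add, Multiset.sum_add, Multiset.nsmul_singleton, Multiset.map_replicate,
    Multiset.sum_replicate, Complex.zero_re, Real.log_zero, mul_zero, smul_zero, add_zero] at h2
  rw [h2]

lemma isHermitian_map_star {A : Matrix n n ℂ} (hA : A.IsHermitian) :
    (A.map (starRingEnd ℂ)).IsHermitian := by
  ext i j
  simp only [Matrix.conjTranspose_apply, Matrix.map_apply, starRingEnd_apply, star_star]
  conv_lhs => rw [← hA]
  simp [Matrix.conjTranspose_apply]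

lemma vnEntropy_map_star {A : Matrix n n ℂ} (hA : A.IsHermitian) :
    vnEntropy (A.map (starRingEnd ℂ)) = vnEntropy A := by
  rw [vnEntropy_eq_roots (isHermitian_map_star hA), vnEntropy_eq_roots hA,
    Matrix.charpoly_map,
    Polynomial.Splits.roots_map (IsAlgClosed.splits _) _, Multiset.map_map]
  have : ((fun z : ℂ => z.re * Real.log z.re) ∘ (starRingEnd ℂ)) =
      fun z : ℂ => z.re * Real.log z.re := by
    funext z
    simp
  rw [this]

lemma exists_vec {ψ : Matrix n n ℂ} (hψ : ψ.PosSemidef) (htr : ψ.trace = 1)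
    (hp : ψ * ψ = ψ) : ∃ v : n → ℂ, ψ = Matrix.vecMulVec v (star v) := by
  classical
  have h := hψ.1
  set U : Matrix n n ℂ := (h.eigenvectorUnitary : Matrix n n ℂ) with hUdef
  have hUU : U * star U = 1 := Matrix.mem_unitaryGroup_iff.mp h.eigenvectorUnitary.2
  have hdiag : star U * ψ * U = Matrix.diagonal (RCLike.ofReal ∘ h.eigenvalues) :=
    by
      have := h.conjStarAlgAut_star_eigenvectorUnitary
      simp only [Unitary.conjStarAlgAut_apply, Unitary.coe_star, star_star] at this
      exact this
  set d := h.eigenvalues with hd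
  have hsq : ∀ i, d i = 0 ∨ d i = 1 := by
    intro i
    have e1 : (star U * ψ * U) * (star U * ψ * U) = star U * (ψ * (U * star U) * ψ) * U := by
      simp only [mul_assoc]
    rw [hUU, mul_one, hp, hdiag, Matrix.diagonal_mul_diagonal] at e1
    have e2 := congrFun (congrFun e1 i) i
    simp only [Matrix.diagonal_apply_eq, Function.comp_apply, Pi.mul_apply] at e2
    have e2' : ((d i : ℝ) : ℂ) * ((d i : ℝ) : ℂ) = ((d i : ℝ) : ℂ) := e2
    have e3 : d i * d i = d i := by exact_mod_cast e2'
    rcases mul_eq_zero.mp (show d i * (d i - 1) = 0 by rw [mul_sub, mul_one, e3, sub_self])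
      with h0 | h1
    · exact Or.inl h0
    · exact Or.inr (by linarith [sub_eq_zero.mp h1])
  have hsum : ∑ i, d i = 1 := by
    have t1 : (star U * ψ * U).trace = 1 := by
      rw [Matrix.trace_mul_cycle, hUU, one_mul, htr]
    rw [hdiag, Matrix.trace_diagonal] at t1
    have t2 : ((∑ i, d i : ℝ) : ℂ) = 1 := by
      rw [Complex.ofReal_sum]
      exact t1
    exact_mod_cast t2
  obtain ⟨i₀, hi₀⟩ : ∃ i, d i ≠ 0 := by
    by_contra hc
    push_neg at hc
    simp [hc] at hsum
  have hdi₀ : d i₀ = 1 := (hsq i₀).resolve_left hi₀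
  have hrest : ∀ j, j ≠ i₀ → d j = 0 := by
    have hzero : ∑ j ∈ Finset.univ.erase i₀, d j = 0 := by
      have h5 := Finset.add_sum_erase Finset.univ d (Finset.mem_univ i₀)
      rw [hsum, hdi₀] at h5
      linarith
    intro j hj
    have hnn : ∀ x ∈ Finset.univ.erase i₀, 0 ≤ d x := by
      intro x _
      rcases hsq x with h0 | h0 <;> simp [h0]
    exact (Finset.sum_eq_zero_iff_of_nonneg hnn).mp hzero j
      (Finset.mem_erase.mpr ⟨hj, Finset.mem_univ j⟩)
  refine ⟨fun x => U x i₀, ?_⟩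
  have hdval : ∀ t, ((RCLike.ofReal ∘ d) t : ℂ) = if t = i₀ then 1 else 0 := by
    intro t
    by_cases ht : t = i₀
    · simp [ht, hdi₀]
    · simp [Function.comp_apply, ht, hrest t ht]
  ext x y
  rw [h.spectral_theorem, Unitary.conjStarAlgAut_apply]
  simp only [Matrix.mul_apply, Matrix.diagonal_apply, Matrix.star_apply,
    Matrix.vecMulVec_apply, ← hd, Finset.sum_mul, ite_mul, zero_mul, mul_assoc, hdval,
    mul_ite, mul_zero, mul_one, Finset.sum_ite_eq', Finset.sum_ite_eq, Finset.mem_univ,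
    if_true, Pi.star_apply, one_mul]
  rfl

lemma mul_vecMulVec {l m k : Type*} [Fintype m] (A : Matrix l m ℂ) (u : m → ℂ) (w : k → ℂ) :
    A * Matrix.vecMulVec u w = Matrix.vecMulVec (A *ᵥ u) w := by
  ext x y
  simp only [Matrix.mul_apply, Matrix.vecMulVec_apply, Matrix.mulVec, dotProduct]
  rw [Finset.sum_mul]
  exact Finset.sum_congr rfl fun z _ => by ring

lemma vecMulVec_mul {l m k : Type*} [Fintype m] (u : l → ℂ) (w : m → ℂ) (B : Matrix m k ℂ) :
    Matrix.vecMulVec u w * B = Matrix.vecMulVec u (w ᵥ* B) := by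
  ext x y
  simp only [Matrix.mul_apply, Matrix.vecMulVec_apply, Matrix.vecMul, dotProduct]
  rw [Finset.mul_sum]
  exact Finset.sum_congr rfl fun z _ => by ring

section Key

variable {ι A E : Type*} [Fintype ι] [DecidableEq ι] [Fintype A] [DecidableEq A]
  [Fintype E] [DecidableEq E]

theorem key (Q : ι → Matrix A A ℂ) (hQH : ∀ a, (Q a)ᴴ = Q a) (hQP : ∀ a, Q a * Q a = Q a)
    (hQO : ∀ a b, a ≠ b → Q a * Q b = 0) (hQsum : ∑ a, Q a = 1) (v : A × E → ℂ) :
    condEnt (∑ a, Matrix.single a a (1 : ℂ) ⊗ₖ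
        ptraceLeft ((Q a ⊗ₖ (1 : Matrix E E ℂ)) * Matrix.vecMulVec v (star v) *
          (Q a ⊗ₖ (1 : Matrix E E ℂ))))
      = vnEntropy (∑ a, Q a * ptraceRight (Matrix.vecMulVec v (star v)) * Q a)
        - vnEntropy (ptraceRight (Matrix.vecMulVec v (star v))) := by
  classical
  set ψ : Matrix (A × E) (A × E) ℂ := Matrix.vecMulVec v (star v) with hψdef
  set M : Matrix A E ℂ := Matrix.of (fun i k => v (i, k)) with hMdef
  set Pr : ι → Matrix (A × E) (A × E) ℂ := fun a => Q a ⊗ₖ (1 : Matrix E E ℂ) with hPrdef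
  have hPrH : ∀ a, (Pr a)ᴴ = Pr a := by
    intro a
    ext ⟨i, k⟩ ⟨j, l⟩
    simp only [hPrdef, Matrix.conjTranspose_apply, Matrix.kroneckerMap_apply, star_mul']
    rw [show star (Q a j i) = (Q a)ᴴ i j from rfl, hQH]
    congr 1
    by_cases hkl : k = l <;> simp [Matrix.one_apply, hkl, eq_comm]
  have hvec : ∀ a (x : A × E), (Pr a *ᵥ v) x = (Q a * M) x.1 x.2 := by
    rintro a ⟨i, k⟩
    simp only [hPrdef, Matrix.mulVec, dotProduct, Matrix.kroneckerMap_apply,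
      Fintype.sum_prod_type, Matrix.mul_apply, hMdef, Matrix.of_apply]
    refine Finset.sum_congr rfl fun i' _ => ?_
    rw [Finset.sum_eq_single k]
    · simp
    · intro k' _ hk'; simp [Matrix.one_apply, Ne.symm hk']
    · intro hk; exact absurd (Finset.mem_univ k) hk
  have hsand : ∀ a b, Pr a * ψ * Pr b =
      Matrix.vecMulVec (Pr a *ᵥ v) (star (Pr b *ᵥ v)) := by
    intro a b
    rw [hψdef, mul_vecMulVec, vecMulVec_mul]
    congr 1
    rw [Matrix.star_mulVec, hPrH]
  have hsand' : ∀ a b (x y : A × E), (Pr a * ψ * Pr b) x y =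
      (Q a * M) x.1 x.2 * star ((Q b * M) y.1 y.2) := by
    intro a b x y
    rw [hsand a b]
    simp [Matrix.vecMulVec_apply, hvec, Pi.star_apply]
  -- the reshaped post-measurement purification
  set L : Matrix A (ι × E) ℂ := Matrix.of (fun i p => star ((Q p.1 * M) i p.2)) with hLdef
  have hLL : ∀ (p q : ι × E), (Lᴴ * L) p q =
      ∑ i, (Q p.1 * M) i p.2 * star ((Q q.1 * M) i q.2) := by
    intro p q
    simp only [Matrix.mul_apply, Matrix.conjTranspose_apply, hLdef, Matrix.of_apply, star_star]
  have hPT : ∀ a (k l : E), ptraceLeft (Pr a * ψ * Pr a) k l =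
      ∑ i, (Q a * M) i k * star ((Q a * M) i l) := by
    intro a k l
    simp only [ptraceLeft, Matrix.of_apply]
    exact Finset.sum_congr rfl fun i _ => hsand' a a (i, k) (i, l)
  -- ρ_AB = M Mᴴ
  have hrho : ptraceRight ψ = M * Mᴴ := by
    ext i j
    simp [ptraceRight, hψdef, Matrix.vecMulVec_apply, Matrix.mul_apply,
      Matrix.conjTranspose_apply, hMdef, Pi.star_apply]
  -- E1 : the cq state is Lᴴ L
  have hE1 : (∑ a, Matrix.single a a (1 : ℂ) ⊗ₖ
      ptraceLeft (Pr a * ψ * Pr a)) = Lᴴ * L := by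
    ext ⟨a, k⟩ ⟨b, l⟩
    rw [Matrix.sum_apply, hLL]
    by_cases hab : a = b
    · subst hab
      rw [Finset.sum_eq_single a]
      · rw [Matrix.kroneckerMap_apply, hPT]
        simp [Matrix.single]
      · intro c _ hc
        simp [Matrix.kroneckerMap_apply, Matrix.single, hc]
      · intro h'; exact absurd (Finset.mem_univ a) h'
    · have hz : (Q b * M)ᴴ * (Q a * M) = 0 := by
        rw [Matrix.conjTranspose_mul, hQH, Matrix.mul_assoc, ← Matrix.mul_assoc (Q b),
          hQO b a (Ne.symm hab), Matrix.zero_mul, Matrix.mul_zero]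
      have hrhs : (∑ i, (Q a * M) i k * star ((Q b * M) i l))
          = ((Q b * M)ᴴ * (Q a * M)) l k := by
        rw [Matrix.mul_apply]
        exact Finset.sum_congr rfl fun i _ => by
          rw [Matrix.conjTranspose_apply]; ring
      rw [hrhs, hz]
      rw [Finset.sum_eq_zero]
      · simp
      · intro c _
        rcases em (c = a) with rfl | hca
        · simp [Matrix.kroneckerMap_apply, Matrix.single, hab]
        · simp [Matrix.kroneckerMap_apply, Matrix.single, hca]
  -- sums of projected blocks
  have hsumQQ : (∑ a, (Q a * M)ᴴ * (Q a * M)) = Mᴴ * M := by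
    have h1 : ∀ a, (Q a * M)ᴴ * (Q a * M) = Mᴴ * (Q a * M) := by
      intro a
      rw [Matrix.conjTranspose_mul, hQH, Matrix.mul_assoc, ← Matrix.mul_assoc (Q a), hQP]
    rw [Finset.sum_congr rfl fun a _ => h1 a, ← Matrix.mul_sum, ← Matrix.sum_mul, hQsum,
      Matrix.one_mul]
  have hTm : (∑ a, Q a * ptraceRight ψ * Q a) = ∑ a, (Q a * M) * (Q a * M)ᴴ := by
    rw [hrho]
    refine Finset.sum_congr rfl fun a _ => ?_
    rw [Matrix.conjTranspose_mul, hQH]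
    simp only [Matrix.mul_assoc]
  -- E3 : ptraceLeft of the cq state
  have hE3 : ptraceLeft (Lᴴ * L) = (Mᴴ * M).map (starRingEnd ℂ) := by
    ext k l
    have h' := congrArg star (congrFun (congrFun hsumQQ k) l)
    simp only [Matrix.sum_apply, Matrix.mul_apply, Matrix.conjTranspose_apply, star_sum,
      star_mul', star_star] at h'
    simpa only [ptraceLeft, Matrix.of_apply, hLL, Matrix.map_apply, Matrix.mul_apply,
      Matrix.conjTranspose_apply, starRingEnd_apply, star_sum, star_mul', star_star] using h'
  -- E2 : L Lᴴ equals pinched state conjugated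
  have hE2 : L * Lᴴ = (∑ a, Q a * ptraceRight ψ * Q a).map (starRingEnd ℂ) := by
    rw [hTm]
    ext i j
    simp only [Matrix.mul_apply, Matrix.conjTranspose_apply, hLdef, Matrix.of_apply,
      Matrix.map_apply, Matrix.sum_apply, starRingEnd_apply, star_sum, star_mul', star_star,
      Fintype.sum_prod_type]
  -- Hermitian facts
  have hMHM : (Mᴴ * M).IsHermitian := by
    simpa using Matrix.isHermitian_mul_conjTranspose_self Mᴴ
  have hTmH : (∑ a, Q a * ptraceRight ψ * Q a).IsHermitian := by
    rw [hTm, Matrix.IsHermitian, Matrix.conjTranspose_sum]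
    exact Finset.sum_congr rfl fun a _ => Matrix.isHermitian_mul_conjTranspose_self _
  -- final chain
  rw [condEnt, hE1, hE3]
  have c1 : vnEntropy (Lᴴ * L) = vnEntropy (∑ a, Q a * ptraceRight ψ * Q a) := by
    rw [← vnEntropy_mul_conjTranspose L, hE2, vnEntropy_map_star hTmH]
  have c2 : vnEntropy ((Mᴴ * M).map (starRingEnd ℂ)) = vnEntropy (ptraceRight ψ) := by
    rw [vnEntropy_map_star hMHM, ← vnEntropy_mul_conjTranspose M, hrho]
  rw [c1, c2]

end Key

end EntAux

/-- **Eve's side-information as entropy production on `ρ_{AB}`** (Eq. (5) of the paper).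
For a pure state `ψ_{ABE}` and a projective measurement `{P_a}` on Alice's system, the
conditional entropy `H(A₀|E)` of the classical-quantum post-measurement state
`ρ_{A₀E} = Σ_a |a⟩⟨a| ⊗ tr_{AB}[(P_a ⊗ I_B ⊗ I_E) ψ_{ABE} (P_a ⊗ I_B ⊗ I_E)]` equals the
entropy production `H(T[ρ_{AB}]) - H(ρ_{AB})` of the pinching channel
`T[σ] = Σ_a (P_a ⊗ I_B) σ (P_a ⊗ I_B)` on the Alice–Bob reduced state. -/
theorem cond_entropy_eq_entropy_production
    (nA dA dB dE : ℕ)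
    (P : Fin nA → Matrix (Fin dA) (Fin dA) ℂ)
    (hP : IsProjMeas P)
    (ψ : Matrix ((Fin dA × Fin dB) × Fin dE) ((Fin dA × Fin dB) × Fin dE) ℂ)
    (hψ : ψ.PosSemidef) (hψtr : ψ.trace = 1) (hψpure : ψ * ψ = ψ) :
    condEnt (∑ a, Matrix.single a a (1 : ℂ) ⊗ₖ
        ptraceLeft
          (((P a ⊗ₖ (1 : Matrix (Fin dB) (Fin dB) ℂ)) ⊗ₖ (1 : Matrix (Fin dE) (Fin dE) ℂ)) * ψ *
            ((P a ⊗ₖ (1 : Matrix (Fin dB) (Fin dB) ℂ)) ⊗ₖ (1 : Matrix (Fin dE) (Fin dE) ℂ))))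
      = vnEntropy (∑ a, (P a ⊗ₖ (1 : Matrix (Fin dB) (Fin dB) ℂ)) * ptraceRight ψ *
          (P a ⊗ₖ (1 : Matrix (Fin dB) (Fin dB) ℂ)))
        - vnEntropy (ptraceRight ψ) := by
  classical
  obtain ⟨hPH, hPP, hPO, hPsum⟩ := hP
  obtain ⟨v, hv⟩ := EntAux.exists_vec hψ hψtr hψpure
  set Q : Fin nA → Matrix (Fin dA × Fin dB) (Fin dA × Fin dB) ℂ :=
    fun a => P a ⊗ₖ (1 : Matrix (Fin dB) (Fin dB) ℂ) with hQdef
  have hQmul : ∀ a b, Q a * Q b = (P a * P b) ⊗ₖ (1 : Matrix (Fin dB) (Fin dB) ℂ) := by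
    intro a b
    show (P a ⊗ₖ (1 : Matrix (Fin dB) (Fin dB) ℂ)) * (P b ⊗ₖ (1 : Matrix (Fin dB) (Fin dB) ℂ))
      = (P a * P b) ⊗ₖ (1 : Matrix (Fin dB) (Fin dB) ℂ)
    rw [← Matrix.mul_kronecker_mul, one_mul]
  have hQH : ∀ a, (Q a)ᴴ = Q a := by
    intro a
    ext ⟨i, k⟩ ⟨j, l⟩
    simp only [hQdef, Matrix.conjTranspose_apply, Matrix.kroneckerMap_apply, star_mul']
    rw [show star (P a j i) = (P a)ᴴ i j from rfl, hPH]
    congr 1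
    by_cases hkl : k = l <;> simp [Matrix.one_apply, hkl, eq_comm]
  have hQP : ∀ a, Q a * Q a = Q a := by
    intro a
    rw [hQmul, hPP]
  have hQO : ∀ a b, a ≠ b → Q a * Q b = 0 := by
    intro a b hab
    rw [hQmul, hPO a b hab, Matrix.zero_kronecker]
  have hQsum : ∑ a, Q a = 1 := by
    have h1 : (∑ a, Q a) = (∑ a, P a) ⊗ₖ (1 : Matrix (Fin dB) (Fin dB) ℂ) := by
      ext ⟨i, k⟩ ⟨j, l⟩
      simp [hQdef, Matrix.sum_apply, Matrix.kroneckerMap_apply, Finset.sum_mul]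
    rw [h1, hPsum, Matrix.one_kronecker_one]
  rw [hv]
  exact EntAux.key Q hQH hQP hQO hQsum v
end
end

section
/- Let T be a completely positive trace-preserving map on d×d complex matrices given by Kraus operators V_i with Σ_i V_i† V_i = I, acting as T[σ] = Σ_i V_i σ V_i†, and let T*[X] = Σ_i V_i† X V_i be its adjoint. Let ρ be a density matrix such that T[ρ] and T*[T[ρ]] are positive definite. Then H(T[ρ]) ≥ −tr(ρ ln(T*[T[ρ]])), where ln of a positive definite matrix is defined via the spectral decomposition. -/
open scoped Matrix Kronecker BigOperators ComplexOrder

noncomputable section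

/-- Logarithm of a (positive definite) matrix via its spectral decomposition
(junk value `0` if the matrix is not Hermitian). -/
def matLog {n : Type*} [Fintype n] [DecidableEq n] (A : Matrix n n ℂ) : Matrix n n ℂ :=
  if h : A.IsHermitian then
    (h.eigenvectorUnitary : Matrix n n ℂ) *
      Matrix.diagonal (fun i => (Real.log (h.eigenvalues i) : ℂ)) *
        star (h.eigenvectorUnitary : Matrix n n ℂ)
  else 0

/-- The channel `T[σ] = Σ_i V_i σ V_i†` determined by Kraus operators `V_i`. -/
def krausChannel {d k : ℕ} (V : Fin k → Matrix (Fin d) (Fin d) ℂ)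
    (σ : Matrix (Fin d) (Fin d) ℂ) : Matrix (Fin d) (Fin d) ℂ :=
  ∑ i, V i * σ * (V i)ᴴ

/-- The adjoint channel `T*[X] = Σ_i V_i† X V_i`. -/
def krausAdjoint {d k : ℕ} (V : Fin k → Matrix (Fin d) (Fin d) ℂ)
    (X : Matrix (Fin d) (Fin d) ℂ) : Matrix (Fin d) (Fin d) ℂ :=
  ∑ i, (V i)ᴴ * X * V i


open MeasureTheory Set Filter

lemma logRep (a : ℝ) (ha : 0 < a) :
    IntegrableOn (fun s => 1/(1+s) - 1/(a+s)) (Ioi 0) volume ∧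
      ∫ s in Ioi (0:ℝ), (1/(1+s) - 1/(a+s)) = Real.log a := by
  have hderiv : ∀ x ∈ Ici (0:ℝ), HasDerivAt (fun s => Real.log (1+s) - Real.log (a+s))
      (1/(1+x) - 1/(a+x)) x := by
    intro x hx
    have h1 : (0:ℝ) < 1 + x := by simp only [mem_Ici] at hx; linarith
    have h2 : (0:ℝ) < a + x := by simp only [mem_Ici] at hx; linarith
    have d1 : HasDerivAt (fun s : ℝ => Real.log (1+s)) (1/(1+x)) x := by
      have := (Real.hasDerivAt_log h1.ne').comp x ((hasDerivAt_id x).const_add 1)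
      simpa [one_div, Function.comp_def] using this
    have d2 : HasDerivAt (fun s : ℝ => Real.log (a+s)) (1/(a+x)) x := by
      have := (Real.hasDerivAt_log h2.ne').comp x ((hasDerivAt_id x).const_add a)
      simpa [one_div, Function.comp_def] using this
    exact d1.sub d2
  have key : Tendsto (fun s : ℝ => (1+s)/(a+s)) atTop (nhds 1) := by
    have h1 : Tendsto (fun s : ℝ => (1-a)/(a+s)) atTop (nhds 0) := by
      apply Filter.Tendsto.div_atTop tendsto_const_nhds
      exact tendsto_atTop_add_const_left _ a tendsto_id
    have h2 := h1.const_add 1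
    rw [add_zero] at h2
    apply h2.congr'
    filter_upwards [Filter.eventually_ge_atTop 0] with s hs
    have hne : a + s ≠ 0 := by positivity
    field_simp
    ring
  have htend : Tendsto (fun s => Real.log (1+s) - Real.log (a+s)) atTop (nhds 0) := by
    have hlog := ((Real.continuousAt_log one_ne_zero).tendsto.comp key)
    rw [Real.log_one] at hlog
    apply hlog.congr'
    filter_upwards [Filter.eventually_ge_atTop 0] with s hs
    simp only [Function.comp_apply]
    rw [Real.log_div (by linarith) (by linarith)]
  rcases le_or_gt 1 a with h | h
  · have hpos : ∀ x ∈ Ioi (0:ℝ), 0 ≤ 1/(1+x) - 1/(a+x) := by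
      intro x hx
      have h1 : (0:ℝ) < 1 + x := by simp only [mem_Ioi] at hx; linarith
      have h2 : (0:ℝ) < a + x := by simp only [mem_Ioi] at hx; linarith
      have hle : 1 + x ≤ a + x := by linarith
      have := one_div_le_one_div_of_le h1 hle
      linarith
    refine ⟨integrableOn_Ioi_deriv_of_nonneg' hderiv hpos htend, ?_⟩
    rw [integral_Ioi_of_hasDerivAt_of_nonneg' hderiv hpos htend]
    norm_num
  · have hpos : ∀ x ∈ Ioi (0:ℝ), 1/(1+x) - 1/(a+x) ≤ 0 := by
      intro x hx
      have h1 : (0:ℝ) < 1 + x := by simp only [mem_Ioi] at hx; linarith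
      have h2 : (0:ℝ) < a + x := by simp only [mem_Ioi] at hx; linarith
      have hle : a + x ≤ 1 + x := by linarith
      have := one_div_le_one_div_of_le h2 hle
      linarith
    refine ⟨integrableOn_Ioi_deriv_of_nonpos' hderiv hpos htend, ?_⟩
    rw [integral_Ioi_of_hasDerivAt_of_nonpos' hderiv hpos htend]
    norm_num

lemma scalar_key {ι κ : Type*} [Fintype ι] [Fintype κ]
    (lam : ι → ℝ) (mu : κ → ℝ) (r : κ → ℝ)
    (hlam : ∀ m, 0 < lam m) (hmu : ∀ j, 0 < mu j) (hr : ∀ j, 0 ≤ r j)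
    (hsum : ∑ m, lam m = ∑ j, r j)
    (hineq : ∀ s : ℝ, 0 < s → ∑ j, r j / (mu j + s) ≤ ∑ m, lam m / (lam m + s)) :
    ∑ m, lam m * Real.log (lam m) ≤ ∑ j, r j * Real.log (mu j) := by
  set F : ℝ → ℝ := fun s =>
    (∑ m, lam m * (1/(1+s) - 1/(lam m + s))) - ∑ j, r j * (1/(1+s) - 1/(mu j + s)) with hF
  have hint1 : ∀ m : ι, IntegrableOn (fun s => lam m * (1/(1+s) - 1/(lam m + s))) (Ioi 0) volume :=
    fun m => ((logRep (lam m) (hlam m)).1.const_mul _)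
  have hint2 : ∀ j : κ, IntegrableOn (fun s => r j * (1/(1+s) - 1/(mu j + s))) (Ioi 0) volume :=
    fun j => ((logRep (mu j) (hmu j)).1.const_mul _)
  have hintsum1 : IntegrableOn (fun s => ∑ m, lam m * (1/(1+s) - 1/(lam m + s))) (Ioi 0) volume := by
    apply MeasureTheory.integrable_finset_sum
    intro m _; exact hint1 m
  have hintsum2 : IntegrableOn (fun s => ∑ j, r j * (1/(1+s) - 1/(mu j + s))) (Ioi 0) volume := by
    apply MeasureTheory.integrable_finset_sum
    intro j _; exact hint2 j
  have hFval : ∫ s in Ioi (0:ℝ), F s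
      = (∑ m, lam m * Real.log (lam m)) - ∑ j, r j * Real.log (mu j) := by
    rw [hF]
    rw [MeasureTheory.integral_sub hintsum1 hintsum2]
    rw [MeasureTheory.integral_finset_sum _ (fun m _ => hint1 m),
        MeasureTheory.integral_finset_sum _ (fun j _ => hint2 j)]
    congr 1
    · refine Finset.sum_congr rfl fun m _ => ?_
      rw [MeasureTheory.integral_const_mul, (logRep (lam m) (hlam m)).2]
    · refine Finset.sum_congr rfl fun j _ => ?_
      rw [MeasureTheory.integral_const_mul, (logRep (mu j) (hmu j)).2]
  have hFle : ∀ s ∈ Ioi (0:ℝ), F s ≤ 0 := by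
    intro s hs
    simp only [mem_Ioi] at hs
    have e1 : ∀ m : ι, lam m * (1/(1+s) - 1/(lam m + s))
        = lam m / (1+s) - lam m / (lam m + s) := by intro m; ring
    have e2 : ∀ j : κ, r j * (1/(1+s) - 1/(mu j + s))
        = r j / (1+s) - r j / (mu j + s) := by intro j; ring
    have : F s = (∑ j, r j / (mu j + s)) - ∑ m, lam m / (lam m + s) := by
      simp only [hF, e1, e2, Finset.sum_sub_distrib]
      rw [← Finset.sum_div, ← Finset.sum_div, hsum]
      ring
    rw [this, sub_nonpos]
    exact hineq s hs
  have : 0 ≤ ∫ s in Ioi (0:ℝ), (-F) s := by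
    apply MeasureTheory.setIntegral_nonneg measurableSet_Ioi
    intro s hs
    simp only [Pi.neg_apply, neg_nonneg]
    exact hFle s hs
  simp only [Pi.neg_apply] at this
  rw [MeasureTheory.integral_neg, hFval] at this
  linarith

section Helpers

variable {n : Type*} [Fintype n] [DecidableEq n]

lemma conj_diag_mul (U : Matrix n n ℂ) (hU' : star U * U = 1) (f g : n → ℂ) :
    (U * Matrix.diagonal f * star U) * (U * Matrix.diagonal g * star U)
      = U * Matrix.diagonal (fun j => f j * g j) * star U := by
  have h : star U * (U * Matrix.diagonal g * star U) = Matrix.diagonal g * star U := by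
    rw [← Matrix.mul_assoc, ← Matrix.mul_assoc, hU', Matrix.one_mul]
  rw [Matrix.mul_assoc (U * Matrix.diagonal f) (star U) _, h, ← Matrix.mul_assoc,
    Matrix.mul_assoc U (Matrix.diagonal f) (Matrix.diagonal g), Matrix.diagonal_mul_diagonal]

lemma conj_diag_add (U : Matrix n n ℂ) (f g : n → ℂ) :
    U * Matrix.diagonal f * star U + U * Matrix.diagonal g * star U
      = U * Matrix.diagonal (fun j => f j + g j) * star U := by
  rw [← Matrix.diagonal_add, Matrix.mul_add, Matrix.add_mul]

lemma conj_smul_one (U : Matrix n n ℂ) (hU2 : U * star U = 1) (c : ℂ) :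
    U * Matrix.diagonal (fun _ => c) * star U = c • 1 := by
  rw [← Matrix.smul_one_eq_diagonal, Matrix.mul_smul, Matrix.mul_one, Matrix.smul_mul, hU2]

lemma trace_mul_conj_diag (ρ U : Matrix n n ℂ) (f : n → ℂ) :
    (ρ * (U * Matrix.diagonal f * star U)).trace = ∑ j, (star U * ρ * U) j j * f j := by
  have h : ρ * (U * Matrix.diagonal f * star U) = (ρ * U * Matrix.diagonal f) * star U := by
    simp only [Matrix.mul_assoc]
  rw [h, Matrix.trace_mul_comm, ← Matrix.mul_assoc, ← Matrix.mul_assoc]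
  simp [Matrix.trace, Matrix.diag, Matrix.mul_diagonal]

lemma psd_diag_re_nonneg {M : Matrix n n ℂ} (hM : M.PosSemidef) (i : n) :
    0 ≤ (M i i).re := by
  have h := hM.re_dotProduct_nonneg (Pi.single i 1)
  simpa [dotProduct, Matrix.mulVec, Pi.single_apply] using h

lemma psd_trace_re_nonneg {M : Matrix n n ℂ} (hM : M.PosSemidef) : 0 ≤ M.trace.re := by
  rw [Matrix.trace, Complex.re_sum]
  exact Finset.sum_nonneg fun i _ => psd_diag_re_nonneg hM i

open scoped MatrixOrder in
lemma trace_mul_psd_re_nonneg {ρ M : Matrix n n ℂ} (hρ : ρ.PosSemidef) (hM : M.PosSemidef) :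
    0 ≤ ((ρ * M).trace).re := by
  have h1 : ρ * M = ρ * CFC.sqrt M * CFC.sqrt M := by
    rw [Matrix.mul_assoc, CFC.sqrt_mul_sqrt_self M hM.nonneg]
  rw [h1, Matrix.trace_mul_comm, ← Matrix.mul_assoc]
  have h2 : (CFC.sqrt M * ρ * CFC.sqrt M).PosSemidef := by
    have := hρ.mul_mul_conjTranspose_same (CFC.sqrt M)
    rwa [(Matrix.nonneg_iff_posSemidef.mp (CFC.sqrt_nonneg M)).1.eq] at this
  exact psd_trace_re_nonneg h2

lemma posSemidef_sum {ι : Type*} (s : Finset ι) (f : ι → Matrix n n ℂ)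
    (h : ∀ i ∈ s, (f i).PosSemidef) : (∑ i ∈ s, f i).PosSemidef := by
  classical
  induction s using Finset.induction with
  | empty => simpa using Matrix.PosSemidef.zero
  | insert _ _ hx ih =>
    rw [Finset.sum_insert hx]
    exact ((h _ (Finset.mem_insert_self _ _)).add
      (ih fun i hi => h i (Finset.mem_insert_of_mem hi)))

lemma smul_one_psd {s : ℝ} (hs : 0 ≤ s) : ((s:ℂ) • (1 : Matrix n n ℂ)).PosSemidef := by
  rw [Matrix.smul_one_eq_diagonal]
  refine Matrix.posSemidef_diagonal_iff.mpr fun i => ?_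
  exact Complex.zero_le_real.mpr hs

end Helpers

lemma kraus_trace_duality {d k : ℕ} (V : Fin k → Matrix (Fin d) (Fin d) ℂ)
    (ρ X : Matrix (Fin d) (Fin d) ℂ) :
    (krausChannel V ρ * X).trace = (ρ * krausAdjoint V X).trace := by
  simp only [krausChannel, krausAdjoint, Finset.sum_mul, Matrix.mul_sum, Matrix.trace_sum]
  refine Finset.sum_congr rfl fun i _ => ?_
  rw [Matrix.trace_mul_comm ρ, Matrix.mul_assoc ((V i)ᴴ * X) (V i) ρ,
    Matrix.trace_mul_cycle ((V i)ᴴ) X (V i * ρ)]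

lemma kraus_adjoint_add_smul {d k : ℕ} (V : Fin k → Matrix (Fin d) (Fin d) ℂ)
    (hV : ∑ i, (V i)ᴴ * V i = 1) (X : Matrix (Fin d) (Fin d) ℂ) (c : ℂ) :
    krausAdjoint V (X + c • 1) = krausAdjoint V X + c • 1 := by
  unfold krausAdjoint
  simp only [Matrix.mul_add, Matrix.add_mul, Matrix.mul_smul, Matrix.smul_mul, Matrix.mul_one]
  rw [Finset.sum_add_distrib, ← Finset.smul_sum, hV]

open scoped MatrixOrder in
lemma choi {d k : ℕ} (V : Fin k → Matrix (Fin d) (Fin d) ℂ)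
    (hV : ∑ i, (V i)ᴴ * V i = 1)
    {C : Matrix (Fin d) (Fin d) ℂ} (hC : C.PosDef)
    (hPC : (krausAdjoint V C).PosDef) :
    (krausAdjoint V C⁻¹ - (krausAdjoint V C)⁻¹).PosSemidef := by
  set s1 := CFC.sqrt C with hs1def
  have hs1h : s1.IsHermitian := (Matrix.nonneg_iff_posSemidef.mp (CFC.sqrt_nonneg C)).1
  have hs1sq : s1 * s1 = C := CFC.sqrt_mul_sqrt_self C hC.posSemidef.nonneg
  have hdet : IsUnit s1.det := by
    refine isUnit_iff_ne_zero.mpr fun h0 => ?_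
    have h1 : s1.det * s1.det = C.det := by rw [← Matrix.det_mul, hs1sq]
    exact hC.det_pos.ne' (by rw [← h1, h0, mul_zero])
  have hinv1 : s1⁻¹ * s1 = 1 := Matrix.nonsing_inv_mul _ hdet
  have hinv2 : s1 * s1⁻¹ = 1 := Matrix.mul_nonsing_inv _ hdet
  have hs1ih : (s1⁻¹).IsHermitian := hs1h.inv
  have hCinv : C⁻¹ = s1⁻¹ * s1⁻¹ := by rw [← hs1sq, Matrix.mul_inv_rev]
  set G := (krausAdjoint V C)⁻¹ with hGdef
  have hGh : G.IsHermitian := hPC.1.inv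
  have hdetP : IsUnit (krausAdjoint V C).det := isUnit_iff_ne_zero.mpr hPC.det_pos.ne'
  have hG1 : krausAdjoint V C * G = 1 := Matrix.mul_nonsing_inv _ hdetP
  have hG2 : G * krausAdjoint V C = 1 := Matrix.nonsing_inv_mul _ hdetP
  have k1 : ∀ X : Matrix (Fin d) (Fin d) ℂ, s1⁻¹ * (s1 * X) = X := fun X => by
    rw [← Matrix.mul_assoc, hinv1, Matrix.one_mul]
  have k2 : ∀ X : Matrix (Fin d) (Fin d) ℂ, s1 * (s1⁻¹ * X) = X := fun X => by
    rw [← Matrix.mul_assoc, hinv2, Matrix.one_mul]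
  have k3 : ∀ X : Matrix (Fin d) (Fin d) ℂ, s1⁻¹ * (s1⁻¹ * X) = C⁻¹ * X := fun X => by
    rw [← Matrix.mul_assoc, ← hCinv]
  have k4 : ∀ X : Matrix (Fin d) (Fin d) ℂ, s1 * (s1 * X) = C * X := fun X => by
    rw [← Matrix.mul_assoc, hs1sq]
  have expand : ∀ i : Fin k,
      (s1⁻¹ * V i - s1 * (V i * G))ᴴ * (s1⁻¹ * V i - s1 * (V i * G))
        = ((V i)ᴴ * (C⁻¹ * V i) - (V i)ᴴ * (V i * G))
          - (G * ((V i)ᴴ * V i) - G * ((V i)ᴴ * (C * (V i * G)))) := by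
    intro i
    simp only [Matrix.conjTranspose_sub, Matrix.conjTranspose_mul, hs1ih.eq, hs1h.eq, hGh.eq]
    simp only [sub_mul, mul_sub, Matrix.mul_assoc, k1, k2, k3, k4]
    abel
  have key : krausAdjoint V C⁻¹ - G
      = ∑ i, (s1⁻¹ * V i - s1 * (V i * G))ᴴ * (s1⁻¹ * V i - s1 * (V i * G)) := by
    simp only [expand]
    rw [Finset.sum_sub_distrib, Finset.sum_sub_distrib, Finset.sum_sub_distrib]
    have ha1 : ∑ i, (V i)ᴴ * (C⁻¹ * V i) = krausAdjoint V C⁻¹ := by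
      unfold krausAdjoint; simp only [Matrix.mul_assoc]
    have ha2 : ∑ i, (V i)ᴴ * (V i * G) = G := by
      simp only [← Matrix.mul_assoc]
      rw [← Finset.sum_mul, hV, Matrix.one_mul]
    have ha3 : ∑ i : Fin k, G * ((V i)ᴴ * V i) = G := by
      rw [← Finset.mul_sum, hV, Matrix.mul_one]
    have ha4 : ∑ i, G * ((V i)ᴴ * (C * (V i * G))) = G := by
      have e : ∀ i : Fin k, G * ((V i)ᴴ * (C * (V i * G)))
          = G * (((V i)ᴴ * C * V i) * G) := by
        intro i; simp only [Matrix.mul_assoc]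
      simp only [e]
      rw [← Finset.mul_sum, ← Finset.sum_mul,
        show (∑ i, (V i)ᴴ * C * V i) = krausAdjoint V C from rfl, hG1, Matrix.mul_one]
    rw [ha1, ha2, ha3, ha4]
    abel
  rw [hGdef] at key
  rw [key]
  exact posSemidef_sum _ _ fun i _ => Matrix.posSemidef_conjTranspose_mul_self _

section Helpers2
variable {n : Type*} [Fintype n] [DecidableEq n]

lemma conj_diag_mul' (U : Matrix n n ℂ) (hU' : star U * U = 1) (f g : n → ℂ) :
    (U * Matrix.diagonal f * star U) * (U * Matrix.diagonal g * star U)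
      = U * Matrix.diagonal (fun j => f j * g j) * star U := by
  have h : star U * (U * Matrix.diagonal g * star U) = Matrix.diagonal g * star U := by
    rw [← Matrix.mul_assoc, ← Matrix.mul_assoc, hU', Matrix.one_mul]
  rw [Matrix.mul_assoc (U * Matrix.diagonal f) (star U) _, h, ← Matrix.mul_assoc,
    Matrix.mul_assoc U (Matrix.diagonal f) (Matrix.diagonal g), Matrix.diagonal_mul_diagonal]

lemma conj_smul_one' (U : Matrix n n ℂ) (hU2 : U * star U = 1) (c : ℂ) :
    U * Matrix.diagonal (fun _ => c) * star U = c • 1 := by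
  rw [← Matrix.smul_one_eq_diagonal, Matrix.mul_smul, Matrix.mul_one, Matrix.smul_mul, hU2]

lemma spectral_add_smul (M : Matrix n n ℂ) (hM : M.IsHermitian) (s : ℝ) :
    M + (s:ℂ) • 1 = (hM.eigenvectorUnitary : Matrix n n ℂ) *
      Matrix.diagonal (fun j => ((hM.eigenvalues j + s : ℝ) : ℂ)) *
        star (hM.eigenvectorUnitary : Matrix n n ℂ) := by
  have hU2 : (hM.eigenvectorUnitary : Matrix n n ℂ) * star (hM.eigenvectorUnitary : Matrix n n ℂ) = 1 :=
    Matrix.mem_unitaryGroup_iff.mp hM.eigenvectorUnitary.2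
  conv_lhs => rw [hM.spectral_theorem, Unitary.conjStarAlgAut_apply, ← conj_smul_one' _ hU2 (s:ℂ)]
  rw [← Matrix.add_mul, ← Matrix.mul_add, Matrix.diagonal_add]
  congr 2
  funext j
  simp [Function.comp]

lemma conj_diag_inv (M : Matrix n n ℂ) (hM : M.IsHermitian) (s : ℝ)
    (hpos : ∀ i, 0 < hM.eigenvalues i + s) :
    (M + (s:ℂ) • 1)⁻¹ = (hM.eigenvectorUnitary : Matrix n n ℂ) *
      Matrix.diagonal (fun j => (((hM.eigenvalues j + s)⁻¹ : ℝ) : ℂ)) *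
        star (hM.eigenvectorUnitary : Matrix n n ℂ) := by
  have hU2 : (hM.eigenvectorUnitary : Matrix n n ℂ) * star (hM.eigenvectorUnitary : Matrix n n ℂ) = 1 :=
    Matrix.mem_unitaryGroup_iff.mp hM.eigenvectorUnitary.2
  have hU1 : star (hM.eigenvectorUnitary : Matrix n n ℂ) * (hM.eigenvectorUnitary : Matrix n n ℂ) = 1 :=
    Matrix.mem_unitaryGroup_iff'.mp hM.eigenvectorUnitary.2
  rw [spectral_add_smul M hM s]
  apply Matrix.inv_eq_right_inv
  rw [conj_diag_mul' _ hU1]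
  have h : (fun j => ((hM.eigenvalues j + s : ℝ):ℂ) * (((hM.eigenvalues j + s)⁻¹ : ℝ):ℂ))
      = fun _ => (1:ℂ) := by
    funext j
    rw [← Complex.ofReal_mul, mul_inv_cancel₀ (hpos j).ne']
    exact Complex.ofReal_one
  rw [h, Matrix.diagonal_one, Matrix.mul_one, hU2]

lemma trace_mul_conj_diag' (ρ U : Matrix n n ℂ) (f : n → ℂ) :
    (ρ * (U * Matrix.diagonal f * star U)).trace = ∑ j, (star U * ρ * U) j j * f j := by
  have h : ρ * (U * Matrix.diagonal f * star U) = (ρ * U * Matrix.diagonal f) * star U := by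
    simp only [Matrix.mul_assoc]
  rw [h, Matrix.trace_mul_comm, ← Matrix.mul_assoc, ← Matrix.mul_assoc]
  simp [Matrix.trace, Matrix.diag, Matrix.mul_diagonal]

lemma trace_re_conj_diag_ofReal (ρ U : Matrix n n ℂ) (f : n → ℝ) :
    ((ρ * (U * Matrix.diagonal (fun j => ((f j : ℝ) : ℂ)) * star U)).trace).re
      = ∑ j, ((star U * ρ * U) j j).re * f j := by
  rw [trace_mul_conj_diag', Complex.re_sum]
  refine Finset.sum_congr rfl fun j _ => ?_
  simp [Complex.mul_re]

end Helpers2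

/-- **The operator-Jensen step** in the paper's derivation: for a CPTP map `T` with Kraus
operators `V_i` (so `Σ_i V_i† V_i = I`) and a density matrix `ρ` with `T[ρ]` and `T*[T[ρ]]`
positive definite, `H(T[ρ]) ≥ -tr(ρ ln(T*[T[ρ]]))`. -/
theorem entropy_ge_neg_trace_log_adjoint
    (d k : ℕ) (V : Fin k → Matrix (Fin d) (Fin d) ℂ)
    (hV : ∑ i, (V i)ᴴ * V i = 1)
    (ρ : Matrix (Fin d) (Fin d) ℂ) (hρ : ρ.PosSemidef) (hρtr : ρ.trace = 1)
    (hTρ : (krausChannel V ρ).PosDef)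
    (hTTρ : (krausAdjoint V (krausChannel V ρ)).PosDef) :
    vnEntropy (krausChannel V ρ) ≥
      -((ρ * matLog (krausAdjoint V (krausChannel V ρ))).trace).re := by
  classical
  set A := krausChannel V ρ with hAdef
  set B := krausAdjoint V A with hBdef
  have hA1 : A.IsHermitian := hTρ.1
  have hB1 : B.IsHermitian := hTTρ.1
  set U : Matrix (Fin d) (Fin d) ℂ := (hB1.eigenvectorUnitary : Matrix (Fin d) (Fin d) ℂ) with hUdef
  set W : Matrix (Fin d) (Fin d) ℂ := (hA1.eigenvectorUnitary : Matrix (Fin d) (Fin d) ℂ) with hWdef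
  have hU2 : U * star U = 1 := Matrix.mem_unitaryGroup_iff.mp hB1.eigenvectorUnitary.2
  have hU1 : star U * U = 1 := Matrix.mem_unitaryGroup_iff'.mp hB1.eigenvectorUnitary.2
  have hW2 : W * star W = 1 := Matrix.mem_unitaryGroup_iff.mp hA1.eigenvectorUnitary.2
  set lam := hA1.eigenvalues with hlamdef
  set mu := hB1.eigenvalues with hmudef
  set r : Fin d → ℝ := fun j => ((star U * ρ * U) j j).re with hrdef
  have hlam_pos : ∀ m, 0 < lam m := fun m => hTρ.eigenvalues_pos m
  have hmu_pos : ∀ j, 0 < mu j := fun j => hTTρ.eigenvalues_pos j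
  have hr_nonneg : ∀ j, 0 ≤ r j := by
    intro j
    have hpsdU : (star U * ρ * U).PosSemidef := by
      have := hρ.conjTranspose_mul_mul_same U
      rwa [← Matrix.star_eq_conjTranspose] at this
    exact psd_diag_re_nonneg hpsdU j
  have htrA : A.trace = 1 := by
    rw [hAdef]
    unfold krausChannel
    rw [Matrix.trace_sum]
    have e : ∀ i : Fin k, (V i * ρ * (V i)ᴴ).trace = ((V i)ᴴ * V i * ρ).trace := by
      intro i; rw [Matrix.trace_mul_cycle]
    simp only [e]
    rw [← Matrix.trace_sum, ← Finset.sum_mul, hV, Matrix.one_mul, hρtr]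
  have hAdiag : star W * A * W = Matrix.diagonal (RCLike.ofReal ∘ lam) :=
    by
      have hW1 : star W * W = 1 := Matrix.mem_unitaryGroup_iff'.mp hA1.eigenvectorUnitary.2
      conv_lhs => rw [hA1.spectral_theorem, Unitary.conjStarAlgAut_apply]
      show star W * (W * _ * star W) * W = _
      simp only [← Matrix.mul_assoc, hW1, Matrix.one_mul]
      rw [Matrix.mul_assoc, hW1, Matrix.mul_one]
  have hsum_lam : ∑ m, lam m = 1 := by
    have h1 : (star W * A * W).trace = A.trace := by
      rw [Matrix.trace_mul_cycle, hW2, Matrix.one_mul]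
    rw [hAdiag, htrA, Matrix.trace_diagonal] at h1
    have h2 := congrArg Complex.re h1
    rw [Complex.re_sum] at h2
    simpa using h2
  have hsum_r : ∑ j, r j = 1 := by
    have h1 : (star U * ρ * U).trace = 1 := by
      rw [Matrix.trace_mul_cycle, hU2, Matrix.one_mul, hρtr]
    have h2 := congrArg Complex.re h1
    rw [Matrix.trace, Complex.re_sum] at h2
    simpa [Matrix.diag] using h2
  have hineq : ∀ s : ℝ, 0 < s → ∑ j, r j / (mu j + s) ≤ ∑ m, lam m / (lam m + s) := by
    intro s hs
    have hBinv : (B + (s:ℂ) • 1)⁻¹ = U *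
        Matrix.diagonal (fun j => (((mu j + s)⁻¹ : ℝ) : ℂ)) * star U :=
      conj_diag_inv B hB1 s (fun j => add_pos (hmu_pos j) hs)
    have hAinv : (A + (s:ℂ) • 1)⁻¹ = W *
        Matrix.diagonal (fun m => (((lam m + s)⁻¹ : ℝ) : ℂ)) * star W :=
      conj_diag_inv A hA1 s (fun m => add_pos (hlam_pos m) hs)
    have lhs_eq : ∑ j, r j / (mu j + s) = ((ρ * (B + (s:ℂ) • 1)⁻¹).trace).re := by
      rw [hBinv, trace_re_conj_diag_ofReal]
      refine Finset.sum_congr rfl fun j _ => ?_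
      rw [div_eq_mul_inv]
    have rhs_eq : ∑ m, lam m / (lam m + s) = ((A * (A + (s:ℂ) • 1)⁻¹).trace).re := by
      rw [hAinv, trace_re_conj_diag_ofReal]
      refine Finset.sum_congr rfl fun m _ => ?_
      rw [hAdiag, Matrix.diagonal_apply_eq]
      simp [div_eq_mul_inv]
    have hCpd : (A + (s:ℂ) • 1).PosDef := hTρ.add_posSemidef (smul_one_psd hs.le)
    have hlin : krausAdjoint V (A + (s:ℂ) • 1) = B + (s:ℂ) • 1 := by
      rw [kraus_adjoint_add_smul V hV]
    have hBspd : (B + (s:ℂ) • 1).PosDef := hTTρ.add_posSemidef (smul_one_psd hs.le)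
    have hchoi := choi V hV hCpd (by rw [hlin]; exact hBspd)
    rw [hlin] at hchoi
    have hts := trace_mul_psd_re_nonneg hρ hchoi
    rw [Matrix.mul_sub, Matrix.trace_sub, Complex.sub_re] at hts
    have hdual : (A * (A + (s:ℂ) • 1)⁻¹).trace
        = (ρ * krausAdjoint V ((A + (s:ℂ) • 1)⁻¹)).trace := kraus_trace_duality V ρ _
    rw [lhs_eq, rhs_eq, hdual]
    linarith
  have hkey := scalar_key lam mu r hlam_pos hmu_pos hr_nonneg (by rw [hsum_lam, hsum_r]) hineq
  unfold vnEntropy matLog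
  rw [dif_pos hA1, dif_pos hB1]
  rw [trace_re_conj_diag_ofReal ρ U (fun j => Real.log (mu j))]
  simp only [hrdef] at hkey
  linarith
end
end

section
/- Let Φ be a positive linear map on d×d complex matrices (taking d×d matrices to d'×d' matrices) that is unital, i.e. Φ[I_d] = I_{d'}. Then for every positive definite d×d matrix A such that Φ[A] is positive definite, Φ[ln A] ≤ ln Φ[A] in the Löwner (positive semidefinite) order, where the matrix logarithm of a positive definite matrix is defined via the spectral decomposition. -/
open scoped Matrix BigOperators ComplexOrder

noncomputable section

lemma diag_decomp {n : Type*} [Fintype n] [DecidableEq n] (V : Matrix n n ℂ) (f : n → ℂ) :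
    V * Matrix.diagonal f * Vᴴ = ∑ i, f i • (V * Matrix.single i i 1 * Vᴴ) := by
  have hd : Matrix.diagonal f = ∑ i, f i • Matrix.single i i (1 : ℂ) := by
    ext a b
    simp only [Matrix.sum_apply, Matrix.smul_apply, Matrix.single, Matrix.of_apply,
      smul_eq_mul, mul_ite, mul_one, mul_zero]
    by_cases h : a = b
    · subst h
      simp [Matrix.diagonal]
    · rw [Matrix.diagonal_apply_ne _ h]
      rw [Finset.sum_eq_zero]
      intro i _
      by_cases hi : i = a
      · subst hi; simp [h]
      · simp [hi]
  rw [hd, Matrix.mul_sum, Matrix.sum_mul]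
  congr 1
  ext i
  rw [Matrix.mul_smul, Matrix.smul_mul]

lemma cs_psd {n : Type*} [Fintype n] [DecidableEq n] {Q : Matrix n n ℂ} (hQ : Q.PosSemidef)
    (x y : n → ℂ) :
    ‖dotProduct (star x) (Q *ᵥ y)‖ ^ 2 ≤
      (dotProduct (star x) (Q *ᵥ x)).re * (dotProduct (star y) (Q *ᵥ y)).re := by
  obtain ⟨B, rfl⟩ : ∃ B : Matrix n n ℂ, Q = Bᴴ * B := by
    open scoped MatrixOrder in exact CStarAlgebra.nonneg_iff_eq_star_mul_self.mp hQ.nonneg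
  have key : ∀ a b : n → ℂ, dotProduct (star a) ((Bᴴ * B) *ᵥ b)
      = (inner ℂ ((WithLp.equiv 2 _).symm (B *ᵥ a)) ((WithLp.equiv 2 _).symm (B *ᵥ b)) : ℂ) := by
    intro a b
    change _ = dotProduct (B *ᵥ b) (star (B *ᵥ a))
    rw [← Matrix.mulVec_mulVec, Matrix.dotProduct_mulVec,
      ← Matrix.star_mulVec, dotProduct_comm]
  rw [key, key, key]
  have h1 := norm_inner_le_norm (𝕜 := ℂ) ((WithLp.equiv 2 (n → ℂ)).symm (B *ᵥ x))
    ((WithLp.equiv 2 (n → ℂ)).symm (B *ᵥ y))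
  have h2 : ∀ a : n → ℂ, (inner ℂ ((WithLp.equiv 2 (n → ℂ)).symm (B *ᵥ a))
      ((WithLp.equiv 2 (n → ℂ)).symm (B *ᵥ a)) : ℂ).re
      = ‖(WithLp.equiv 2 (n → ℂ)).symm (B *ᵥ a)‖ ^ 2 := by
    intro a
    rw [← inner_self_eq_norm_sq (𝕜 := ℂ)]
    rfl
  rw [h2, h2]
  calc ‖(inner ℂ ((WithLp.equiv 2 (n → ℂ)).symm (B *ᵥ x))
        ((WithLp.equiv 2 (n → ℂ)).symm (B *ᵥ y)) : ℂ)‖ ^ 2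
      ≤ (‖(WithLp.equiv 2 (n → ℂ)).symm (B *ᵥ x)‖ * ‖(WithLp.equiv 2 (n → ℂ)).symm (B *ᵥ y)‖) ^ 2 := by
        have := norm_nonneg ((inner ℂ ((WithLp.equiv 2 (n → ℂ)).symm (B *ᵥ x))
          ((WithLp.equiv 2 (n → ℂ)).symm (B *ᵥ y)) : ℂ))
        nlinarith [h1]
    _ = _ := by ring

lemma log_diff_tendsto (a : ℝ) (ha : 0 < a) :
    Filter.Tendsto (fun s : ℝ => Real.log (a + s) - Real.log (1 + s)) Filter.atTop (nhds 0) := by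
  have h1 : Filter.Tendsto (fun s : ℝ => (a + s) / (1 + s)) Filter.atTop (nhds 1) := by
    have h2 : Filter.Tendsto (fun s : ℝ => 1 + (a - 1) / (1 + s)) Filter.atTop (nhds 1) := by
      have h3 : Filter.Tendsto (fun s : ℝ => (a - 1) / (1 + s)) Filter.atTop (nhds 0) :=
        Filter.Tendsto.div_atTop tendsto_const_nhds
          (Filter.tendsto_atTop_add_const_left _ _ Filter.tendsto_id)
      simpa using tendsto_const_nhds.add h3
    refine h2.congr' ?_
    filter_upwards [Filter.eventually_gt_atTop 0] with s hs
    field_simp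
    ring
  have h4 : Filter.Tendsto (fun s : ℝ => Real.log ((a + s) / (1 + s))) Filter.atTop
      (nhds (Real.log 1)) := ((Real.continuousAt_log one_ne_zero).tendsto.comp h1)
  rw [Real.log_one] at h4
  refine h4.congr' ?_
  filter_upwards [Filter.eventually_gt_atTop 0] with s hs
  rw [Real.log_div (by positivity) (by positivity)]

lemma key_real {ι κ : Type*} [Fintype ι] [Fintype κ] (lam : ι → ℝ) (mu : κ → ℝ)
    (q : ι → ℝ) (p : κ → ℝ) (hlam : ∀ i, 0 < lam i) (hmu : ∀ j, 0 < mu j)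
    (hsum : ∑ i, q i = ∑ j, p j)
    (hs : ∀ s : ℝ, 0 ≤ s → ∑ j, p j / (mu j + s) ≤ ∑ i, q i / (lam i + s)) :
    ∑ i, q i * Real.log (lam i) ≤ ∑ j, p j * Real.log (mu j) := by
  set F : ℝ → ℝ := fun s => ∑ i, q i * Real.log (lam i + s) - ∑ j, p j * Real.log (mu j + s)
    with hF
  have hderiv : ∀ s : ℝ, 0 ≤ s → HasDerivAt F
      (∑ i, q i * (lam i + s)⁻¹ - ∑ j, p j * (mu j + s)⁻¹) s := by
    intro s hs0
    have h1 : ∀ (a : ℝ), 0 < a → HasDerivAt (fun s : ℝ => Real.log (a + s)) (a + s)⁻¹ s := by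
      intro a ha
      have := ((hasDerivAt_id s).const_add a).log (by positivity)
      simpa using this
    apply HasDerivAt.sub
    · exact HasDerivAt.fun_sum fun i _ => ((h1 (lam i) (hlam i)).const_mul (q i))
    · exact HasDerivAt.fun_sum fun j _ => ((h1 (mu j) (hmu j)).const_mul (p j))
  have hmono : MonotoneOn F (Set.Ici 0) := by
    apply monotoneOn_of_deriv_nonneg (convex_Ici 0)
    · intro x hx
      exact ((hderiv x hx).continuousAt).continuousWithinAt
    · intro x hx
      rw [interior_Ici] at hx
      exact (hderiv x (le_of_lt hx)).differentiableAt.differentiableWithinAt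
    · intro x hx
      rw [interior_Ici] at hx
      rw [(hderiv x (le_of_lt hx)).deriv]
      have := hs x (le_of_lt hx)
      simp only [div_eq_mul_inv] at this ⊢
      linarith
  have htend : Filter.Tendsto F Filter.atTop (nhds 0) := by
    have h1 : Filter.Tendsto (fun s => ∑ i, q i * (Real.log (lam i + s) - Real.log (1 + s))
        - ∑ j, p j * (Real.log (mu j + s) - Real.log (1 + s))) Filter.atTop (nhds 0) := by
      have h2 : Filter.Tendsto (fun s => ∑ i, q i * (Real.log (lam i + s) - Real.log (1 + s)))
          Filter.atTop (nhds 0) := by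
        have := tendsto_finset_sum (Finset.univ : Finset ι)
          (fun i _ => (log_diff_tendsto (lam i) (hlam i)).const_mul (q i))
        simpa using this
      have h3 : Filter.Tendsto (fun s => ∑ j, p j * (Real.log (mu j + s) - Real.log (1 + s)))
          Filter.atTop (nhds 0) := by
        have := tendsto_finset_sum (Finset.univ : Finset κ)
          (fun j _ => (log_diff_tendsto (mu j) (hmu j)).const_mul (p j))
        simpa using this
      simpa using h2.sub h3
    refine h1.congr fun s => ?_
    simp only [mul_sub, Finset.sum_sub_distrib, ← Finset.sum_mul, hsum, hF]
    ring
  have hle : F 0 ≤ 0 := by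
    refine ge_of_tendsto htend ?_
    filter_upwards [Filter.eventually_ge_atTop 0] with s hs0
    exact hmono (Set.self_mem_Ici) hs0 hs0
  simp only [hF, add_zero] at hle
  linarith

lemma my_sum_mulVec {n ι : Type*} [Fintype n] [Fintype ι] (M : ι → Matrix n n ℂ) (v : n → ℂ) :
    (∑ i, M i) *ᵥ v = ∑ i, M i *ᵥ v :=
  map_sum (Matrix.mulVec.addMonoidHomLeft v) _ _

lemma my_dot_sum {n ι : Type*} [Fintype n] [Fintype ι] (v : n → ℂ) (w : ι → n → ℂ) :
    dotProduct v (∑ i, w i) = ∑ i, dotProduct v (w i) := by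
  simp only [dotProduct, Finset.sum_apply, Finset.mul_sum]
  exact Finset.sum_comm

lemma quad_sum {n ι : Type*} [Fintype n] [Fintype ι] (M : ι → Matrix n n ℂ) (c : ι → ℂ)
    (v : n → ℂ) :
    dotProduct (star v) ((∑ i, c i • M i) *ᵥ v)
      = ∑ i, c i * dotProduct (star v) (M i *ᵥ v) := by
  rw [my_sum_mulVec, my_dot_sum]
  congr 1
  ext i
  rw [Matrix.smul_mulVec, dotProduct_smul]
  rfl

lemma core {n ι κ : Type*} [Fintype n] [DecidableEq n] [Fintype ι] [Fintype κ] [DecidableEq κ]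
    (Q : ι → Matrix n n ℂ) (R : κ → Matrix n n ℂ) (lam : ι → ℝ) (mu : κ → ℝ)
    (hQp : ∀ i, (Q i).PosSemidef) (hRp : ∀ j, (R j).PosSemidef)
    (hlam : ∀ i, 0 < lam i) (hmu : ∀ j, 0 < mu j)
    (hQ1 : ∑ i, Q i = 1) (hR1 : ∑ j, R j = 1)
    (hRR : ∀ j k, R j * R k = if j = k then R j else 0)
    (hBB : ∑ i, (lam i : ℂ) • Q i = ∑ j, (mu j : ℂ) • R j) :
    (∑ j, (Real.log (mu j) : ℂ) • R j - ∑ i, (Real.log (lam i) : ℂ) • Q i).PosSemidef := by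
  refine Matrix.PosSemidef.of_dotProduct_mulVec_nonneg ?_ ?_
  · show _ = _
    rw [Matrix.conjTranspose_sub, Matrix.conjTranspose_sum, Matrix.conjTranspose_sum]
    congr 1
    · refine Finset.sum_congr rfl fun j _ => ?_
      rw [Matrix.conjTranspose_smul, (hRp j).1.eq]
      simp [Complex.star_def, Complex.conj_ofReal]
    · refine Finset.sum_congr rfl fun i _ => ?_
      rw [Matrix.conjTranspose_smul, (hQp i).1.eq]
      simp [Complex.star_def, Complex.conj_ofReal]
  intro v
  -- quadratic forms
  set qc : ι → ℂ := fun i => dotProduct (star v) (Q i *ᵥ v) with hqc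
  set pc : κ → ℂ := fun j => dotProduct (star v) (R j *ᵥ v) with hpc
  have hqcn : ∀ i, 0 ≤ qc i := fun i => (hQp i).dotProduct_mulVec_nonneg v
  have hpcn : ∀ j, 0 ≤ pc j := fun j => (hRp j).dotProduct_mulVec_nonneg v
  set q : ι → ℝ := fun i => (qc i).re with hq
  set p : κ → ℝ := fun j => (pc j).re with hp
  have hqcr : ∀ i, qc i = ((q i : ℝ) : ℂ) := by
    intro i
    have := (Complex.nonneg_iff.mp (hqcn i)).2
    exact Complex.ext rfl this.symm
  have hpcr : ∀ j, pc j = ((p j : ℝ) : ℂ) := by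
    intro j
    have := (Complex.nonneg_iff.mp (hpcn j)).2
    exact Complex.ext rfl this.symm
  have hqn : ∀ i, 0 ≤ q i := fun i => (Complex.nonneg_iff.mp (hqcn i)).1
  have hpn : ∀ j, 0 ≤ p j := fun j => (Complex.nonneg_iff.mp (hpcn j)).1
  -- reduce goal to a real inequality
  rw [Matrix.sub_mulVec, dotProduct_sub, quad_sum, quad_sum]
  show 0 ≤ (∑ j, (Real.log (mu j) : ℂ) * pc j) - ∑ i, (Real.log (lam i) : ℂ) * qc i
  have hquadsum : ∀ (w : n → ℂ), dotProduct (star w) ((1 : Matrix n n ℂ) *ᵥ w)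
      = dotProduct (star w) w := by
    intro w; rw [Matrix.one_mulVec]
  have hsumqp : ∑ i, q i = ∑ j, p j := by
    have h1 : ∑ i, qc i = dotProduct (star v) v := by
      have := (my_dot_sum (star v) (fun i => Q i *ᵥ v)).symm
      rw [hqc]
      rw [this, ← my_sum_mulVec, hQ1, Matrix.one_mulVec]
    have h2 : ∑ j, pc j = dotProduct (star v) v := by
      have := (my_dot_sum (star v) (fun j => R j *ᵥ v)).symm
      rw [hpc]
      rw [this, ← my_sum_mulVec, hR1, Matrix.one_mulVec]
    have := h1.trans h2.symm
    have := congrArg Complex.re this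
    rwa [Complex.re_sum, Complex.re_sum] at this
  have key : ∑ i, q i * Real.log (lam i) ≤ ∑ j, p j * Real.log (mu j) := by
    refine key_real lam mu q p hlam hmu hsumqp ?_
    intro s hs0
    set N : Matrix n n ℂ := ∑ j, (((mu j + s)⁻¹ : ℝ) : ℂ) • R j with hN
    set u : n → ℂ := N *ᵥ v with hu
    have hmus : ∀ j, (0:ℝ) < mu j + s := fun j => by linarith [hmu j]
    have hlams : ∀ i, (0:ℝ) < lam i + s := fun i => by linarith [hlam i]
    have hNh : Nᴴ = N := by
      rw [hN, Matrix.conjTranspose_sum]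
      refine Finset.sum_congr rfl fun j _ => ?_
      rw [Matrix.conjTranspose_smul, (hRp j).1.eq]
      simp [Complex.star_def, Complex.conj_ofReal]
    have hBsR : (∑ j, ((mu j + s : ℝ) : ℂ) • R j) * N = 1 := by
      rw [hN, Finset.sum_mul]
      have hterm : ∀ j, (((mu j + s : ℝ):ℂ) • R j) * (∑ k, (((mu k + s)⁻¹ : ℝ) : ℂ) • R k)
          = R j := by
        intro j
        rw [Matrix.mul_sum]
        rw [Finset.sum_eq_single j]
        · rw [Matrix.smul_mul, Matrix.mul_smul, hRR, if_pos rfl, smul_smul,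
            ← Complex.ofReal_mul, mul_inv_cancel₀ (ne_of_gt (hmus j))]
          simp
        · intro k _ hk
          rw [Matrix.smul_mul, Matrix.mul_smul, hRR, if_neg (Ne.symm hk)]
          simp
        · intro h; exact absurd (Finset.mem_univ j) h
      rw [Finset.sum_congr rfl fun j _ => hterm j, hR1]
    have hBs : ∑ i, ((lam i + s : ℝ) : ℂ) • Q i = ∑ j, ((mu j + s : ℝ) : ℂ) • R j := by
      have e1 : ∀ i : ι, ((lam i + s:ℝ):ℂ) • Q i = (lam i:ℂ) • Q i + (s:ℂ) • Q i := by
        intro i; push_cast; rw [add_smul]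
      have e2 : ∀ j : κ, ((mu j + s:ℝ):ℂ) • R j = (mu j:ℂ) • R j + (s:ℂ) • R j := by
        intro j; push_cast; rw [add_smul]
      rw [Finset.sum_congr rfl fun i _ => e1 i, Finset.sum_congr rfl fun j _ => e2 j,
        Finset.sum_add_distrib, Finset.sum_add_distrib, hBB, ← Finset.smul_sum,
        ← Finset.smul_sum, hQ1, hR1]
    have hBsu : (∑ i, ((lam i + s : ℝ) : ℂ) • Q i) *ᵥ u = v := by
      rw [hBs, hu, Matrix.mulVec_mulVec, hBsR, Matrix.one_mulVec]
    set S : ℝ := ∑ j, p j / (mu j + s) with hS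
    set T : ℝ := ∑ i, q i / (lam i + s) with hT
    have hS0 : 0 ≤ S := Finset.sum_nonneg fun j _ => div_nonneg (hpn j) (le_of_lt (hmus j))
    have hT0 : 0 ≤ T := Finset.sum_nonneg fun i _ => div_nonneg (hqn i) (le_of_lt (hlams i))
    have huv : dotProduct (star u) v = ((S:ℝ):ℂ) := by
      rw [hu, Matrix.star_mulVec, ← Matrix.dotProduct_mulVec, hNh, hN, quad_sum]
      show (∑ j, (((mu j + s)⁻¹ : ℝ) : ℂ) * pc j) = _
      rw [hS]
      push_cast
      refine Finset.sum_congr rfl fun j _ => ?_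
      rw [hpcr j]
      push_cast
      rw [div_eq_mul_inv]
      ring
    -- the quantities
    set t : ι → ℂ := fun i => dotProduct (star u) (Q i *ᵥ v) with ht
    set cc : ι → ℂ := fun i => dotProduct (star u) (Q i *ᵥ u) with hcc
    have hccn : ∀ i, 0 ≤ cc i := fun i => (hQp i).dotProduct_mulVec_nonneg u
    set c : ι → ℝ := fun i => (cc i).re with hc
    have hcn : ∀ i, 0 ≤ c i := fun i => (Complex.nonneg_iff.mp (hccn i)).1
    have hccr : ∀ i, cc i = ((c i : ℝ) : ℂ) := fun i =>
      Complex.ext rfl ((Complex.nonneg_iff.mp (hccn i)).2).symm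
    have htsum : ∑ i, t i = ((S:ℝ):ℂ) := by
      rw [ht, ← my_dot_sum (star u) (fun i => Q i *ᵥ v), ← my_sum_mulVec, hQ1,
        Matrix.one_mulVec, huv]
    have hCs : ∑ i, (lam i + s) * c i = S := by
      have h1 : ∑ i, ((lam i + s : ℝ):ℂ) * cc i = ((S:ℝ):ℂ) := by
        rw [← quad_sum (fun i => Q i) (fun i => ((lam i + s : ℝ):ℂ)) u, hBsu, huv]
      have h2 : ((∑ i, (lam i + s) * c i : ℝ) : ℂ) = ((S:ℝ):ℂ) := by
        rw [← h1]
        push_cast [hccr]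
        rfl
      exact_mod_cast h2
    -- Cauchy–Schwarz chain
    have hstep1 : S ≤ ∑ i, Real.sqrt (c i * q i) := by
      have hSre : S = ∑ i, (t i).re := by
        have := congrArg Complex.re htsum
        rw [Complex.re_sum] at this
        simpa using this.symm
      rw [hSre]
      refine Finset.sum_le_sum fun i _ => ?_
      have hcs := cs_psd (hQp i) u v
      have h3 : ‖t i‖ ≤ Real.sqrt (c i * q i) := by
        have := Real.sqrt_le_sqrt hcs
        rwa [Real.sqrt_sq (norm_nonneg _)] at this
      calc (t i).re ≤ ‖t i‖ := Complex.re_le_norm _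
        _ = ‖t i‖ := rfl
        _ ≤ _ := h3
    have hstep2 : ∑ i, Real.sqrt (c i * q i)
        ≤ Real.sqrt (∑ i, (lam i + s) * c i) * Real.sqrt (∑ i, q i / (lam i + s)) := by
      have heq : ∀ i, Real.sqrt (c i * q i)
          = Real.sqrt ((lam i + s) * c i) * Real.sqrt (q i / (lam i + s)) := by
        intro i
        have hne : lam i + s ≠ 0 := ne_of_gt (hlams i)
        rw [← Real.sqrt_mul (mul_nonneg (le_of_lt (hlams i)) (hcn i))]
        congr 1
        field_simp
      rw [Finset.sum_congr rfl fun i _ => heq i]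
      exact Real.sum_sqrt_mul_sqrt_le _ (fun i => mul_nonneg (le_of_lt (hlams i)) (hcn i))
        (fun i => div_nonneg (hqn i) (le_of_lt (hlams i)))
    rw [hCs, ← hT] at hstep2
    have hST : S ≤ Real.sqrt S * Real.sqrt T := le_trans hstep1 hstep2
    rcases eq_or_lt_of_le hS0 with h0 | hSpos
    · rw [← h0]; exact hT0
    · have hsq : Real.sqrt S * Real.sqrt S = S := Real.mul_self_sqrt hS0
      have h4 : Real.sqrt S ≤ Real.sqrt T := by
        have h5 : Real.sqrt S * Real.sqrt S ≤ Real.sqrt S * Real.sqrt T := by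
          rw [hsq]; exact hST
        exact le_of_mul_le_mul_left h5 (Real.sqrt_pos.mpr hSpos)
      calc S = Real.sqrt S ^ 2 := (Real.sq_sqrt hS0).symm
        _ ≤ Real.sqrt T ^ 2 := pow_le_pow_left₀ (Real.sqrt_nonneg _) h4 2
        _ = T := Real.sq_sqrt hT0
  have : (∑ j, (Real.log (mu j) : ℂ) * pc j) - (∑ i, (Real.log (lam i) : ℂ) * qc i)
      = (((∑ j, p j * Real.log (mu j)) - ∑ i, q i * Real.log (lam i) : ℝ) : ℂ) := by
    simp only [hqcr, hpcr]
    push_cast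
    congr 1 <;> exact Finset.sum_congr rfl fun _ _ => by ring
  rw [this]
  rw [Complex.zero_le_real]
  linarith

lemma stdBasis_conjTranspose {n : Type*} [Fintype n] [DecidableEq n] (i : n) :
    (Matrix.single i i (1 : ℂ))ᴴ = Matrix.single i i 1 := by
  ext a b
  simp [Matrix.conjTranspose_apply, Matrix.single, and_comm]

lemma stdBasis_sum {n : Type*} [Fintype n] [DecidableEq n] :
    ∑ i, Matrix.single i i (1 : ℂ) = (1 : Matrix n n ℂ) := by
  ext a b
  simp only [Matrix.sum_apply, Matrix.single, Matrix.of_apply, Matrix.one_apply]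
  by_cases h : a = b
  · subst h; simp
  · rw [if_neg h, Finset.sum_eq_zero]
    intro i _
    by_cases hi : i = a
    · subst hi; simp [h]
    · simp [hi]

section MainSetup

variable {n : Type*} [Fintype n] [DecidableEq n]

/-- the spectral projections family for a Hermitian matrix -/
lemma spectral_family {A : Matrix n n ℂ} (hAh : A.IsHermitian) :
    let V : Matrix n n ℂ := hAh.eigenvectorUnitary
    let P : n → Matrix n n ℂ := fun i => V * Matrix.single i i 1 * Vᴴ
    (∀ i, (P i).PosSemidef) ∧ (∑ i, P i = 1) ∧
      (∀ i j, P i * P j = if i = j then P i else 0) ∧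
      (A = ∑ i, (hAh.eigenvalues i : ℂ) • P i) ∧
      ((V * Matrix.diagonal (fun i => (Real.log (hAh.eigenvalues i) : ℂ)) * Vᴴ)
        = ∑ i, (Real.log (hAh.eigenvalues i) : ℂ) • P i) := by
  intro V P
  have hVV : V * Vᴴ = 1 := by
    have := (Matrix.mem_unitaryGroup_iff).mp (hAh.eigenvectorUnitary).2
    simpa [Matrix.star_eq_conjTranspose] using this
  have hVV' : Vᴴ * V = 1 := by
    have := (Matrix.mem_unitaryGroup_iff').mp (hAh.eigenvectorUnitary).2
    simpa [Matrix.star_eq_conjTranspose] using this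
  refine ⟨?_, ?_, ?_, ?_, ?_⟩
  · intro i
    have hPi : P i = (V * Matrix.single i i 1) * (V * Matrix.single i i 1)ᴴ := by
      rw [Matrix.conjTranspose_mul, stdBasis_conjTranspose, ← Matrix.mul_assoc]
      show P i = V * Matrix.single i i 1 * Matrix.single i i 1 * Vᴴ
      rw [Matrix.mul_assoc V, Matrix.single_mul_single_same, mul_one]
  -- P i = V * E i * Vᴴ
    rw [hPi]
    exact Matrix.posSemidef_self_mul_conjTranspose _
  · show ∑ i, V * Matrix.single i i 1 * Vᴴ = 1
    rw [← Finset.sum_mul, ← Matrix.mul_sum, stdBasis_sum, Matrix.mul_one, hVV]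
  · intro i j
    show (V * Matrix.single i i 1 * Vᴴ) * (V * Matrix.single j j 1 * Vᴴ) = _
    simp only [Matrix.mul_assoc]
    rw [← Matrix.mul_assoc Vᴴ V, hVV', Matrix.one_mul,
      ← Matrix.mul_assoc (Matrix.single i i 1) (Matrix.single j j 1)]
    by_cases h : i = j
    · subst h
      rw [Matrix.single_mul_single_same, mul_one, if_pos rfl]
      show _ = V * Matrix.single i i 1 * Vᴴ
      rw [Matrix.mul_assoc]
    · rw [Matrix.single_mul_single_of_ne (c := (1:ℂ)) i i j h 1, if_neg h, Matrix.zero_mul, Matrix.mul_zero]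
  · have hst := hAh.spectral_theorem
    rw [Unitary.conjStarAlgAut_apply, Matrix.star_eq_conjTranspose] at hst
    conv_lhs => rw [hst]
    rw [diag_decomp]
    rfl
  · exact diag_decomp V _

end MainSetup

/-- **Operator Jensen inequality for the logarithm.** If `Φ` is a positive unital linear map
between matrix algebras and `A` is positive definite with `Φ[A]` positive definite, then
`Φ[ln A] ≤ ln Φ[A]` in the Löwner order. -/
theorem log_operator_jensen
    (d d' : ℕ) (Φ : Matrix (Fin d) (Fin d) ℂ →ₗ[ℂ] Matrix (Fin d') (Fin d') ℂ)
    (hpos : ∀ A : Matrix (Fin d) (Fin d) ℂ, A.PosSemidef → (Φ A).PosSemidef)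
    (hunital : Φ 1 = 1)
    (A : Matrix (Fin d) (Fin d) ℂ) (hA : A.PosDef) (hΦA : (Φ A).PosDef) :
    (matLog (Φ A) - Φ (matLog A)).PosSemidef := by
  classical
  obtain ⟨hPp, hP1, -, hAeq, hlogAeq⟩ := spectral_family hA.1
  obtain ⟨hRp, hR1, hRR, hBeq, hlogBeq⟩ := spectral_family hΦA.1
  set V : Matrix (Fin d) (Fin d) ℂ := (hA.1.eigenvectorUnitary : Matrix (Fin d) (Fin d) ℂ)
    with hV
  set P : Fin d → Matrix (Fin d) (Fin d) ℂ :=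
    fun i => V * Matrix.single i i 1 * Vᴴ with hP
  set W : Matrix (Fin d') (Fin d') ℂ := (hΦA.1.eigenvectorUnitary : Matrix (Fin d') (Fin d') ℂ)
    with hW
  set R : Fin d' → Matrix (Fin d') (Fin d') ℂ :=
    fun j => W * Matrix.single j j 1 * Wᴴ with hR
  have hmatLogA : matLog A = ∑ i, (Real.log (hA.1.eigenvalues i) : ℂ) • P i := by
    rw [matLog, dif_pos hA.1, Matrix.star_eq_conjTranspose]
    exact hlogAeq
  have hmatLogB : matLog (Φ A) = ∑ j, (Real.log (hΦA.1.eigenvalues j) : ℂ) • R j := by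
    rw [matLog, dif_pos hΦA.1, Matrix.star_eq_conjTranspose]
    exact hlogBeq
  have hΦlog : Φ (matLog A) = ∑ i, (Real.log (hA.1.eigenvalues i) : ℂ) • Φ (P i) := by
    rw [hmatLogA, map_sum]
    exact Finset.sum_congr rfl fun i _ => map_smul Φ _ _
  have hΦA_eq : Φ A = ∑ i, ((hA.1.eigenvalues i : ℝ) : ℂ) • Φ (P i) := by
    conv_lhs => rw [hAeq]
    rw [map_sum]
    exact Finset.sum_congr rfl fun i _ => map_smul Φ _ _
  have hQ1 : ∑ i, Φ (P i) = 1 := by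
    rw [← map_sum, hP1, hunital]
  have hBB : ∑ i, ((hA.1.eigenvalues i : ℝ) : ℂ) • Φ (P i)
      = ∑ j, ((hΦA.1.eigenvalues j : ℝ) : ℂ) • R j := by
    rw [← hΦA_eq]
    exact hBeq
  have goal := core (fun i => Φ (P i)) R hA.1.eigenvalues hΦA.1.eigenvalues
    (fun i => hpos _ (hPp i)) hRp (fun i => hA.eigenvalues_pos i)
    (fun j => hΦA.eigenvalues_pos j) hQ1 hR1 hRR hBB
  rw [hmatLogB, hΦlog]
  exact goal
end
end
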